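/- The set S′∖S is empty if and only if 𝕀 is empty. -/
import Mathlib


namespace ProjMonomialCurve

/-- The numerical semigroup generated by `a 1, …, a k` (equivalently by `A₁ = {0,a 1,…,a k}`). -/
def S1 (k : ℕ) (a : ℕ → ℕ) : Set ℕ :=
  {n | ∃ x : ℕ → ℕ, n = ∑ i ∈ Finset.Icc 1 k, x i * a i}

/-- The numerical semigroup generated by the nonzero elements `d - a i` (`0 ≤ i ≤ k-1`)
of `A₂`, where `d = a k`. -/
def S2 (k : ℕ) (a : ℕ → ℕ) : Set ℕ :=
  {n | ∃ x : ℕ → ℕ, n = ∑ i ∈ Finset.range k, x i * (a k - a i)}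

/-- `δ₁ n`: least total number of summands over representations `n = ∑ xᵢ aᵢ`. -/
noncomputable def delta1 (k : ℕ) (a : ℕ → ℕ) (n : ℕ) : ℕ :=
  sInf {m | ∃ x : ℕ → ℕ, n = ∑ i ∈ Finset.Icc 1 k, x i * a i ∧ m = ∑ i ∈ Finset.Icc 1 k, x i}

/-- `δ₂ n`: least total number of summands over representations of `n` by the
nonzero elements of `A₂`. -/
noncomputable def delta2 (k : ℕ) (a : ℕ → ℕ) (n : ℕ) : ℕ :=
  sInf {m | ∃ x : ℕ → ℕ,
    n = ∑ i ∈ Finset.range k, x i * (a k - a i) ∧ m = ∑ i ∈ Finset.range k, x i}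

/-- `ω₁ i`: the least element of `S₍₁₎` congruent to `i` modulo `d = a k`. -/
noncomputable def omega1 (k : ℕ) (a : ℕ → ℕ) (i : ℕ) : ℕ :=
  sInf {n | n ∈ S1 k a ∧ n % a k = i % a k}

/-- `ω₂ i`: the least element of `S₍₂₎` congruent to `i` modulo `d = a k`. -/
noncomputable def omega2 (k : ℕ) (a : ℕ → ℕ) (i : ℕ) : ℕ :=
  sInf {n | n ∈ S2 k a ∧ n % a k = i % a k}

/-- `w i = (ω₁(i), ω₂(d-i))`. -/
noncomputable def w (k : ℕ) (a : ℕ → ℕ) (i : ℕ) : ℕ × ℕ :=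
  (omega1 k a i, omega2 k a (a k - i))

/-- `e h = (h, d - h)`. -/
def e (k : ℕ) (a : ℕ → ℕ) (h : ℕ) : ℕ × ℕ := (h, a k - h)

/-- The affine semigroup `S ⊆ ℕ²` generated by `e (a 0), …, e (a k)`. -/
def S (k : ℕ) (a : ℕ → ℕ) : Set (ℕ × ℕ) :=
  {u | ∃ x : ℕ → ℕ, u = ∑ i ∈ Finset.range (k+1), x i • e k a (a i)}

/-- `S' = {u ∈ ℕ² | u + p•e₀ ∈ S and u + p•e_d ∈ S for some p ∈ ℕ}`. -/
def S' (k : ℕ) (a : ℕ → ℕ) : Set (ℕ × ℕ) :=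
  {u | ∃ p : ℕ, u + p • e k a 0 ∈ S k a ∧ u + p • e k a (a k) ∈ S k a}

/-- `deg u = (u₁ + u₂)/d` for `u ∈ ℕ²`. -/
def deg (k : ℕ) (a : ℕ → ℕ) (u : ℕ × ℕ) : ℕ := (u.1 + u.2) / a k

/-- The index set `𝕀`. -/
noncomputable def II (k : ℕ) (a : ℕ → ℕ) : Set ℕ :=
  {i | 1 ≤ i ∧ i ≤ a k - 1 ∧ (∀ j, 1 ≤ j → j ≤ k - 1 → i ≠ a j) ∧
    deg k a (w k a i) < delta1 k a (w k a i).1}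

/-- `T = {u ∈ ℤ² | d ∣ u₁+u₂, u₁ ∉ S₍₁₎, u₂ ∉ S₍₂₎}`. -/
def T (k : ℕ) (a : ℕ → ℕ) : Set (ℤ × ℤ) :=
  {u | (a k : ℤ) ∣ u.1 + u.2 ∧ (∀ n ∈ S1 k a, (n : ℤ) ≠ u.1) ∧ (∀ n ∈ S2 k a, (n : ℤ) ≠ u.2)}

/-- `deg` for integer points. -/
def degZ (k : ℕ) (a : ℕ → ℕ) (u : ℤ × ℤ) : ℤ := (u.1 + u.2) / (a k : ℤ)

/-- The Castelnuovo–Mumford regularity, expressed combinatorially: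
`max({deg u + 1 : u ∈ S'∖S} ∪ {deg u + 2 : u ∈ T})`. -/
noncomputable def reg (k : ℕ) (a : ℕ → ℕ) : ℤ :=
  sSup ({z : ℤ | ∃ u ∈ S' k a \ S k a, z = (deg k a u : ℤ) + 1} ∪
        {z : ℤ | ∃ u ∈ T k a, z = degZ k a u + 2})

/-- Frobenius number of `S₍₁₎` (greatest integer not in it; `-1` if the semigroup is all of `ℕ`). -/
noncomputable def F1 (k : ℕ) (a : ℕ → ℕ) : ℤ :=
  sSup {z : ℤ | ∀ n ∈ S1 k a, (n : ℤ) ≠ z}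

/-- Frobenius number of `S₍₂₎`. -/
noncomputable def F2 (k : ℕ) (a : ℕ → ℕ) : ℤ :=
  sSup {z : ℤ | ∀ n ∈ S2 k a, (n : ℤ) ≠ z}

/-- The largest gap `λ_max = max_{1 ≤ i ≤ k} (a i - a (i-1) - 1)`. -/
def lamMax (k : ℕ) (a : ℕ → ℕ) : ℕ :=
  (Finset.Icc 1 k).sup (fun i => a i - a (i-1) - 1)

/-- The second largest gap: the minimum over `i` of the largest gap among indices `≠ i`. -/
noncomputable def lamSl (k : ℕ) (a : ℕ → ℕ) : ℕ :=
  sInf {m | ∃ i, 1 ≤ i ∧ i ≤ k ∧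
    m = ((Finset.Icc 1 k).erase i).sup (fun j => a j - a (j-1) - 1)}

/-- The set `A₁ = {a 0, a 1, …, a k}`. -/
def A1set (k : ℕ) (a : ℕ → ℕ) : Set ℕ := {m | ∃ j ≤ k, a j = m}



section Helpers

variable {k : ℕ} {a : ℕ → ℕ}

private lemma sum_split (f : ℕ → ℕ) (k : ℕ) :
    ∑ i ∈ Finset.range (k+1), f i = f 0 + ∑ i ∈ Finset.Icc 1 k, f i := by
  induction k with
  | zero => simp
  | succ n ih =>
      rw [Finset.sum_range_succ, ih, Finset.sum_Icc_succ_top (by omega), add_assoc]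

private lemma fst_rep (x : ℕ → ℕ) :
    (∑ i ∈ Finset.range (k+1), x i • e k a (a i)).1 = ∑ i ∈ Finset.range (k+1), x i * a i := by
  simp [e, Prod.fst_sum]

private lemma snd_rep (x : ℕ → ℕ) :
    (∑ i ∈ Finset.range (k+1), x i • e k a (a i)).2
      = ∑ i ∈ Finset.range (k+1), x i * (a k - a i) := by
  simp [e, Prod.snd_sum]

private lemma add_rep (hle : ∀ i ≤ k, a i ≤ a k) (x : ℕ → ℕ) :
    (∑ i ∈ Finset.range (k+1), x i • e k a (a i)).1
      + (∑ i ∈ Finset.range (k+1), x i • e k a (a i)).2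
      = (∑ i ∈ Finset.range (k+1), x i) * a k := by
  rw [fst_rep, snd_rep, ← Finset.sum_add_distrib, Finset.sum_mul]
  refine Finset.sum_congr rfl fun i hi => ?_
  have h := hle i (Nat.lt_succ_iff.mp (Finset.mem_range.mp hi))
  have h2 : a i + (a k - a i) = a k := by omega
  rw [← Nat.mul_add, h2]

private lemma mem_S_iff (ha0 : a 0 = 0) (hle : ∀ i ≤ k, a i ≤ a k) (u : ℕ × ℕ) :
    u ∈ S k a ↔ ∃ (t : ℕ) (x : ℕ → ℕ), u.1 = ∑ i ∈ Finset.Icc 1 k, x i * a i ∧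
      (∑ i ∈ Finset.Icc 1 k, x i) ≤ t ∧ u.1 + u.2 = t * a k := by
  constructor
  · rintro ⟨x, rfl⟩
    refine ⟨∑ i ∈ Finset.range (k+1), x i, x, ?_, ?_, ?_⟩
    · rw [fst_rep, sum_split (fun i => x i * a i)]; simp [ha0]
    · rw [sum_split x k]; omega
    · rw [add_rep hle]
  · rintro ⟨t, x, h1, h2, h3⟩
    refine ⟨fun i => if i = 0 then t - ∑ i ∈ Finset.Icc 1 k, x i else x i, ?_⟩
    set x' : ℕ → ℕ := fun i => if i = 0 then t - ∑ i ∈ Finset.Icc 1 k, x i else x i with hx'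
    have hIcc : ∀ f : ℕ → ℕ, ∑ i ∈ Finset.Icc 1 k, x' i * f i = ∑ i ∈ Finset.Icc 1 k, x i * f i := by
      intro f
      refine Finset.sum_congr rfl fun i hi => ?_
      have := Finset.mem_Icc.mp hi
      simp only [hx', if_neg (by omega : ¬ i = 0)]
    have hfst : (∑ i ∈ Finset.range (k+1), x' i • e k a (a i)).1 = u.1 := by
      rw [fst_rep, sum_split (fun i => x' i * a i), hIcc a, ha0, ← h1]
      simp
    have hx's : ∑ i ∈ Finset.Icc 1 k, x' i = ∑ i ∈ Finset.Icc 1 k, x i := by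
      refine Finset.sum_congr rfl fun i hi => ?_
      have := Finset.mem_Icc.mp hi
      simp only [hx', if_neg (by omega : ¬ i = 0)]
    have htot : (∑ i ∈ Finset.range (k+1), x' i) = t := by
      rw [sum_split x' k, hx's]
      simp only [hx', if_pos rfl]
      omega
    have hadd := add_rep hle x'
    rw [htot] at hadd
    have hsnd : (∑ i ∈ Finset.range (k+1), x' i • e k a (a i)).2 = u.2 := by omega
    exact Prod.ext hfst.symm hsnd.symm

private lemma mem_S_iff' (hle : ∀ i ≤ k, a i ≤ a k) (u : ℕ × ℕ) :
    u ∈ S k a ↔ ∃ (t : ℕ) (y : ℕ → ℕ), u.2 = ∑ i ∈ Finset.range k, y i * (a k - a i) ∧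
      (∑ i ∈ Finset.range k, y i) ≤ t ∧ u.1 + u.2 = t * a k := by
  constructor
  · rintro ⟨x, rfl⟩
    refine ⟨∑ i ∈ Finset.range (k+1), x i, x, ?_, ?_, ?_⟩
    · rw [snd_rep, Finset.sum_range_succ]; simp
    · rw [Finset.sum_range_succ]; omega
    · rw [add_rep hle]
  · rintro ⟨t, y, h1, h2, h3⟩
    refine ⟨fun i => if i = k then t - ∑ i ∈ Finset.range k, y i else y i, ?_⟩
    set x' : ℕ → ℕ := fun i => if i = k then t - ∑ i ∈ Finset.range k, y i else y i with hx'
    have hR : ∀ f : ℕ → ℕ, ∑ i ∈ Finset.range k, x' i * f i = ∑ i ∈ Finset.range k, y i * f i := by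
      intro f
      refine Finset.sum_congr rfl fun i hi => ?_
      have := Finset.mem_range.mp hi
      simp only [hx', if_neg (by omega : ¬ i = k)]
    have hsnd : (∑ i ∈ Finset.range (k+1), x' i • e k a (a i)).2 = u.2 := by
      rw [snd_rep, Finset.sum_range_succ, hR (fun i => a k - a i), ← h1]
      simp
    have hx's : ∑ i ∈ Finset.range k, x' i = ∑ i ∈ Finset.range k, y i := by
      refine Finset.sum_congr rfl fun i hi => ?_
      have := Finset.mem_range.mp hi
      simp only [hx', if_neg (by omega : ¬ i = k)]
    have htot : (∑ i ∈ Finset.range (k+1), x' i) = t := by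
      rw [Finset.sum_range_succ, hx's]
      simp only [hx', if_pos rfl]
      omega
    have hadd := add_rep hle x'
    rw [htot] at hadd
    have hfst : (∑ i ∈ Finset.range (k+1), x' i • e k a (a i)).1 = u.1 := by omega
    exact Prod.ext hfst.symm hsnd.symm

private lemma mem_S'_iff (ha0 : a 0 = 0) (hd : 0 < a k) (hle : ∀ i ≤ k, a i ≤ a k) (u : ℕ × ℕ) :
    u ∈ S' k a ↔ a k ∣ u.1 + u.2 ∧ u.1 ∈ S1 k a ∧ u.2 ∈ S2 k a := by
  constructor
  · rintro ⟨p, h0, hdd⟩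
    have e0 : u + p • e k a 0 = (u.1, u.2 + p * a k) := by
      simp [e, Prod.ext_iff]
    have ed : u + p • e k a (a k) = (u.1 + p * a k, u.2) := by
      simp [e, Prod.ext_iff]
    rw [e0, mem_S_iff ha0 hle] at h0
    rw [ed, mem_S_iff' hle] at hdd
    obtain ⟨t, x, hx1, hx2, hx3⟩ := h0
    obtain ⟨t', y, hy1, hy2, hy3⟩ := hdd
    refine ⟨⟨t - p, ?_⟩, ⟨x, hx1⟩, ⟨y, hy1⟩⟩
    simp only at hx3
    rw [mul_comm, Nat.sub_mul]
    omega
  · rintro ⟨⟨m, hm⟩, ⟨x, hx⟩, ⟨y, hy⟩⟩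
    set s1 := ∑ i ∈ Finset.Icc 1 k, x i with hs1
    set s2 := ∑ i ∈ Finset.range k, y i with hs2
    refine ⟨s1 + s2, ?_, ?_⟩
    · have e0 : u + (s1 + s2) • e k a 0 = (u.1, u.2 + (s1 + s2) * a k) := by
        simp [e, Prod.ext_iff]
      rw [e0, mem_S_iff ha0 hle]
      exact ⟨m + (s1 + s2), x, hx, by omega, by rw [mul_comm] at hm; rw [add_mul m (s1 + s2)]; omega⟩
    · have ed : u + (s1 + s2) • e k a (a k) = (u.1 + (s1 + s2) * a k, u.2) := by
        simp [e, Prod.ext_iff]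
      rw [ed, mem_S_iff' hle]
      exact ⟨m + (s1 + s2), y, hy, by omega, by rw [mul_comm] at hm; rw [add_mul m (s1 + s2)]; omega⟩

private lemma mem_S_iff_delta (ha0 : a 0 = 0) (hd : 0 < a k) (hle : ∀ i ≤ k, a i ≤ a k)
    (u : ℕ × ℕ) (m : ℕ) (hsum : u.1 + u.2 = m * a k) (h1 : u.1 ∈ S1 k a) :
    u ∈ S k a ↔ delta1 k a u.1 ≤ m := by
  obtain ⟨x₀, hx₀⟩ := h1
  have hne : {m' | ∃ x : ℕ → ℕ, u.1 = ∑ i ∈ Finset.Icc 1 k, x i * a i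
      ∧ m' = ∑ i ∈ Finset.Icc 1 k, x i}.Nonempty := ⟨_, x₀, hx₀, rfl⟩
  constructor
  · intro hS
    rw [mem_S_iff ha0 hle] at hS
    obtain ⟨t, x, h1', h2', h3'⟩ := hS
    have ht : t = m := Nat.eq_of_mul_eq_mul_right hd (by omega)
    have hd1 : delta1 k a u.1 ≤ ∑ i ∈ Finset.Icc 1 k, x i := Nat.sInf_le ⟨x, h1', rfl⟩
    omega
  · intro hm
    have hmem := Nat.sInf_mem hne
    obtain ⟨x, hx1, hx2⟩ := hmem
    rw [mem_S_iff ha0 hle]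
    exact ⟨m, x, hx1, by rw [← hx2]; exact hm, hsum⟩

private lemma gcd_bezout (s : Finset ℕ) (f : ℕ → ℕ) :
    ∃ c : ℕ → ℤ, ((s.gcd f : ℕ) : ℤ) = ∑ i ∈ s, c i * f i := by
  classical
  induction s using Finset.induction_on with
  | empty => exact ⟨0, by simp⟩
  | @insert j s hj ih =>
      obtain ⟨c, hc⟩ := ih
      refine ⟨fun i => if i = j then Nat.gcdA (f j) (s.gcd f)
        else Nat.gcdB (f j) (s.gcd f) * c i, ?_⟩
      rw [Finset.gcd_insert, Finset.sum_insert hj]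
      have hgi : (gcd (f j) (s.gcd f) : ℕ) = Nat.gcd (f j) (s.gcd f) := rfl
      rw [hgi, Nat.gcd_eq_gcd_ab]
      have hsum : ∑ i ∈ s, (if i = j then Nat.gcdA (f j) (s.gcd f)
          else Nat.gcdB (f j) (s.gcd f) * c i) * (f i : ℤ)
          = Nat.gcdB (f j) (s.gcd f) * ∑ i ∈ s, c i * f i := by
        rw [Finset.mul_sum]
        refine Finset.sum_congr rfl fun i hi => ?_
        rw [if_neg (by rintro rfl; exact hj hi)]
        ring
      rw [hsum, ← hc]
      have hbeta : (fun i => if i = j then Nat.gcdA (f j) (s.gcd f)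
          else Nat.gcdB (f j) (s.gcd f) * c i) j = Nat.gcdA (f j) (s.gcd f) := by simp
      rw [hbeta]
      ring

private lemma exists_S1_mod (hgcd : (Finset.Icc 1 k).gcd a = 1) (hd : 0 < a k) (i : ℕ) :
    ∃ n ∈ S1 k a, n % a k = i % a k := by
  obtain ⟨c, hc⟩ := gcd_bezout (Finset.Icc 1 k) a
  rw [hgcd] at hc
  refine ⟨∑ j ∈ Finset.Icc 1 k, ((c j * i) % (a k : ℤ)).toNat * a j, ⟨_, rfl⟩, ?_⟩
  apply (ZMod.natCast_eq_natCast_iff _ _ _).mp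
  push_cast
  have hterm : ∀ j, ((((c j * i) % (a k : ℤ)).toNat : ZMod (a k)))
      = (((c j * i : ℤ)) : ZMod (a k)) := by
    intro j
    have hnn : (0:ℤ) ≤ (c j * i) % (a k : ℤ) :=
      Int.emod_nonneg _ (by exact_mod_cast hd.ne')
    rw [← Int.cast_natCast (R := ZMod (a k)), Int.toNat_of_nonneg hnn, ZMod.intCast_mod]
  calc (∑ j ∈ Finset.Icc 1 k, (((c j * i) % (a k : ℤ)).toNat : ZMod (a k)) * (a j : ZMod (a k)))
      = ∑ j ∈ Finset.Icc 1 k, (((c j * (i:ℤ) * (a j : ℤ)) : ℤ) : ZMod (a k)) := by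
        refine Finset.sum_congr rfl fun j _ => ?_
        rw [hterm j]
        push_cast
        ring
    _ = (((i : ℤ) * ∑ j ∈ Finset.Icc 1 k, c j * (a j : ℤ)) : ℤ) := by
        push_cast [Finset.mul_sum]
        refine Finset.sum_congr rfl fun j _ => ?_
        ring
    _ = (i : ZMod (a k)) := by rw [← hc]; push_cast; ring

private lemma gcd2_eq_one (hk : 3 ≤ k) (ha0 : a 0 = 0) (hle : ∀ i ≤ k, a i ≤ a k)
    (hgcd : (Finset.Icc 1 k).gcd a = 1) :
    (Finset.range k).gcd (fun j => a k - a j) = 1 := by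
  set G := (Finset.range k).gcd (fun j => a k - a j) with hG
  have h0 : G ∣ a k := by
    have := Finset.gcd_dvd (f := fun j => a k - a j) (s := Finset.range k)
      (show 0 ∈ Finset.range k from Finset.mem_range.mpr (by omega))
    simpa [ha0] using this
  have hdvd : ∀ i ∈ Finset.Icc 1 k, G ∣ a i := by
    intro i hi
    have hi' := Finset.mem_Icc.mp hi
    rcases Nat.lt_or_ge i k with h | h
    · have h1 : G ∣ a k - a i := Finset.gcd_dvd (Finset.mem_range.mpr h)
      have h2 : G ∣ a k - (a k - a i) := Nat.dvd_sub h0 h1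
      have h3 : a k - (a k - a i) = a i := by
        have := hle i (by omega)
        omega
      rwa [h3] at h2
    · have : i = k := by omega
      rw [this]; exact h0
  have : G ∣ (Finset.Icc 1 k).gcd a := Finset.dvd_gcd hdvd
  rw [hgcd] at this
  exact Nat.dvd_one.mp this

private lemma exists_S2_mod (hk : 3 ≤ k) (ha0 : a 0 = 0) (hle : ∀ i ≤ k, a i ≤ a k)
    (hgcd : (Finset.Icc 1 k).gcd a = 1) (hd : 0 < a k) (i : ℕ) :
    ∃ n ∈ S2 k a, n % a k = i % a k := by
  obtain ⟨c, hc⟩ := gcd_bezout (Finset.range k) (fun j => a k - a j)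
  rw [gcd2_eq_one hk ha0 hle hgcd] at hc
  refine ⟨∑ j ∈ Finset.range k, ((c j * i) % (a k : ℤ)).toNat * (a k - a j), ⟨_, rfl⟩, ?_⟩
  apply (ZMod.natCast_eq_natCast_iff _ _ _).mp
  push_cast
  have hterm : ∀ j, ((((c j * i) % (a k : ℤ)).toNat : ZMod (a k)))
      = (((c j * i : ℤ)) : ZMod (a k)) := by
    intro j
    have hnn : (0:ℤ) ≤ (c j * i) % (a k : ℤ) :=
      Int.emod_nonneg _ (by exact_mod_cast hd.ne')
    rw [← Int.cast_natCast (R := ZMod (a k)), Int.toNat_of_nonneg hnn, ZMod.intCast_mod]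
  calc (∑ j ∈ Finset.range k, (((c j * i) % (a k : ℤ)).toNat : ZMod (a k)) * ((a k - a j : ℕ) : ZMod (a k)))
      = ∑ j ∈ Finset.range k, (((c j * (i:ℤ) * ((a k - a j : ℕ) : ℤ)) : ℤ) : ZMod (a k)) := by
        refine Finset.sum_congr rfl fun j _ => ?_
        rw [hterm j]
        push_cast
        ring
    _ = (((i : ℤ) * ∑ j ∈ Finset.range k, c j * ((a k - a j : ℕ) : ℤ)) : ℤ) := by
        push_cast [Finset.mul_sum]
        refine Finset.sum_congr rfl fun j _ => ?_
        ring
    _ = (i : ZMod (a k)) := by rw [← hc]; push_cast; ring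

end Helpers

theorem statement_2 (k : ℕ) (a : ℕ → ℕ) (hk : 3 ≤ k) (ha0 : a 0 = 0)
    (hmono : ∀ i, i < k → a i < a (i+1)) (hgcd : (Finset.Icc 1 k).gcd a = 1) :
    S' k a \ S k a = ∅ ↔ II k a = ∅ := by
  have hstep : ∀ n i, i + n ≤ k → a i ≤ a (i + n) := by
    intro n
    induction n with
    | zero => intro i _; exact le_rfl
    | succ m ih =>
        intro i h
        have h1 := ih i (by omega)
        have h2 := hmono (i + m) (by omega)
        have e : i + (m + 1) = i + m + 1 := by omega
        rw [e]
        omega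
  have hlt : ∀ i j, i < j → j ≤ k → a i < a j := by
    intro i j hij hjk
    have h1 := hstep (j - 1 - i) i (by omega)
    have h2 := hmono (j - 1) (by omega)
    have e1 : i + (j - 1 - i) = j - 1 := by omega
    have e2 : j - 1 + 1 = j := by omega
    rw [e1] at h1
    rw [e2] at h2
    omega
  have hle : ∀ i ≤ k, a i ≤ a k := by
    intro i hi
    rcases eq_or_lt_of_le hi with h | h
    · rw [h]
    · exact (hlt i k h le_rfl).le
  have hd : 0 < a k := by
    have := hlt 0 k (by omega) le_rfl
    omega
  constructor
  · -- S'∖S = ∅ → II = ∅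
    intro hSS
    by_contra hII
    obtain ⟨i, hi⟩ := Set.nonempty_iff_ne_empty.mpr hII
    simp only [II, Set.mem_setOf_eq] at hi
    obtain ⟨hi1, hi2, hi3, hi4⟩ := hi
    have hik : i < a k := by omega
    have hne1 : {n | n ∈ S1 k a ∧ n % a k = i % a k}.Nonempty := by
      obtain ⟨n, h1, h2⟩ := exists_S1_mod hgcd hd i
      exact ⟨n, h1, h2⟩
    have hO1 : omega1 k a i ∈ S1 k a ∧ omega1 k a i % a k = i % a k := Nat.sInf_mem hne1
    have hne2 : {n | n ∈ S2 k a ∧ n % a k = (a k - i) % a k}.Nonempty := by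
      obtain ⟨n, h1, h2⟩ := exists_S2_mod hk ha0 hle hgcd hd (a k - i)
      exact ⟨n, h1, h2⟩
    have hO2 : omega2 k a (a k - i) ∈ S2 k a ∧
        omega2 k a (a k - i) % a k = (a k - i) % a k := Nat.sInf_mem hne2
    have hW1 : (w k a i).1 = omega1 k a i := rfl
    have hW2 : (w k a i).2 = omega2 k a (a k - i) := rfl
    have hdvdW : a k ∣ (w k a i).1 + (w k a i).2 := by
      apply Nat.dvd_of_mod_eq_zero
      rw [Nat.add_mod, hW1, hW2, hO1.2, hO2.2]
      have e1 : i % a k = i := Nat.mod_eq_of_lt hik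
      have e2 : (a k - i) % a k = a k - i := Nat.mod_eq_of_lt (by omega)
      rw [e1, e2]
      have e3 : i + (a k - i) = a k := by omega
      rw [e3, Nat.mod_self]
    have hmW : (w k a i).1 + (w k a i).2 = deg k a (w k a i) * a k :=
      (Nat.div_mul_cancel hdvdW).symm
    have hnotS : w k a i ∉ S k a := by
      rw [mem_S_iff_delta ha0 hd hle _ _ hmW (hW1 ▸ hO1.1)]
      omega
    have hS' : w k a i ∈ S' k a :=
      (mem_S'_iff ha0 hd hle _).mpr ⟨hdvdW, hW1 ▸ hO1.1, hW2 ▸ hO2.1⟩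
    have : w k a i ∈ S' k a \ S k a := ⟨hS', hnotS⟩
    rw [hSS] at this
    exact this
  · -- II = ∅ → S'∖S = ∅
    intro hII
    rw [Set.eq_empty_iff_forall_notMem]
    rintro u ⟨huS', huS⟩
    rw [mem_S'_iff ha0 hd hle] at huS'
    obtain ⟨⟨q, hq⟩, hu1, hu2⟩ := huS'
    set i := u.1 % a k with hidef
    have hik : i < a k := Nat.mod_lt _ hd
    have himod : i % a k = i := Nat.mod_eq_of_lt hik
    have hu1mod : u.1 % a k = i % a k := by rw [himod]
    have hu2mod : u.2 % a k = (a k - i) % a k := by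
      have e1 : (u.1 + u.2) ≡ i + (a k - i) [MOD a k] := by
        have e3 : i + (a k - i) = a k := by omega
        rw [e3]
        show (u.1 + u.2) % a k = a k % a k
        rw [hq, Nat.mul_mod_right, Nat.mod_self]
      exact Nat.ModEq.add_left_cancel hu1mod e1
    have hne1 : {n | n ∈ S1 k a ∧ n % a k = i % a k}.Nonempty := ⟨u.1, hu1, hu1mod⟩
    have hO1 : omega1 k a i ∈ S1 k a ∧ omega1 k a i % a k = i % a k :=
      Nat.sInf_mem hne1
    have hO1le : omega1 k a i ≤ u.1 := Nat.sInf_le ⟨hu1, hu1mod⟩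
    have hO2 : omega2 k a (a k - i) ∈ S2 k a ∧
        omega2 k a (a k - i) % a k = (a k - i) % a k :=
      Nat.sInf_mem (⟨u.2, hu2, hu2mod⟩ :
        {n | n ∈ S2 k a ∧ n % a k = (a k - i) % a k}.Nonempty)
    have hO2le : omega2 k a (a k - i) ≤ u.2 := Nat.sInf_le ⟨hu2, hu2mod⟩
    have hW1 : (w k a i).1 = omega1 k a i := rfl
    have hW2 : (w k a i).2 = omega2 k a (a k - i) := rfl
    obtain ⟨q1, hq1⟩ : a k ∣ u.1 - (w k a i).1 :=
      (Nat.modEq_iff_dvd' (hW1 ▸ hO1le)).mp (by rw [hW1]; exact hO1.2.trans hu1mod.symm)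
    obtain ⟨q2, hq2⟩ : a k ∣ u.2 - (w k a i).2 :=
      (Nat.modEq_iff_dvd' (hW2 ▸ hO2le)).mp (by rw [hW2]; exact hO2.2.trans hu2mod.symm)
    have hq1' : u.1 = (w k a i).1 + q1 * a k := by
      have hc : a k * q1 = q1 * a k := Nat.mul_comm _ _
      have := hW1 ▸ hO1le
      omega
    have hq2' : u.2 = (w k a i).2 + q2 * a k := by
      have hc : a k * q2 = q2 * a k := Nat.mul_comm _ _
      have := hW2 ▸ hO2le
      omega
    have hWS : w k a i ∉ S k a := by
      intro hWmem
      apply huS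
      rw [mem_S_iff ha0 hle] at hWmem ⊢
      obtain ⟨t, x, hx1, hx2, hx3⟩ := hWmem
      refine ⟨t + q1 + q2, fun j => if j = k then x j + q1 else x j, ?_, ?_, ?_⟩
      · have e1 : ∑ j ∈ Finset.Icc 1 k, (if j = k then x j + q1 else x j) * a j
            = ∑ j ∈ Finset.Icc 1 k, (x j * a j + if j = k then q1 * a j else 0) := by
          refine Finset.sum_congr rfl fun j hj => ?_
          by_cases h : j = k
          · subst h; simp [add_mul]
          · simp [h]
        rw [e1, Finset.sum_add_distrib,
          Finset.sum_ite_eq' (Finset.Icc 1 k) k (fun j => q1 * a j),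
          if_pos (Finset.mem_Icc.mpr ⟨by omega, le_rfl⟩), ← hx1]
        omega
      · have e1 : ∑ j ∈ Finset.Icc 1 k, (if j = k then x j + q1 else x j)
            = ∑ j ∈ Finset.Icc 1 k, (x j + if j = k then q1 else 0) := by
          refine Finset.sum_congr rfl fun j hj => ?_
          by_cases h : j = k
          · subst h; simp
          · simp [h]
        rw [e1, Finset.sum_add_distrib,
          Finset.sum_ite_eq' (Finset.Icc 1 k) k (fun _ => q1),
          if_pos (Finset.mem_Icc.mpr ⟨by omega, le_rfl⟩)]
        omega
      · have e1 : (t + q1 + q2) * a k = t * a k + q1 * a k + q2 * a k := by ring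
        rw [e1]
        omega
    have hi1 : 1 ≤ i := by
      by_contra h
      have hi0 : i = 0 := by omega
      apply hWS
      have hO1z : omega1 k a i ≤ 0 :=
        Nat.sInf_le ⟨⟨fun _ => 0, by simp⟩, by simp [hi0]⟩
      have hO2z : omega2 k a (a k - i) ≤ 0 :=
        Nat.sInf_le ⟨⟨fun _ => 0, by simp⟩, by simp [hi0]⟩
      rw [mem_S_iff ha0 hle]
      refine ⟨0, fun _ => 0, ?_, ?_, ?_⟩
      · simp
        omega
      · simp
      · simp
        omega
    have hiaj : ∀ j, 1 ≤ j → j ≤ k - 1 → i ≠ a j := by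
      intro j hj1 hj2 hij
      apply hWS
      have hajlt : a j < a k := hlt j k (by omega) le_rfl
      have haj0 : 0 < a j := by
        have := hlt 0 j (by omega) (by omega)
        omega
      have hjIcc : j ∈ Finset.Icc 1 k := Finset.mem_Icc.mpr ⟨hj1, by omega⟩
      have hub1 : omega1 k a i ≤ a j := by
        refine Nat.sInf_le ⟨⟨fun m => if m = j then 1 else 0, ?_⟩, ?_⟩
        · have e1 : ∑ m ∈ Finset.Icc 1 k, (if m = j then 1 else 0) * a m
              = ∑ m ∈ Finset.Icc 1 k, (if m = j then a m else 0) := by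
            refine Finset.sum_congr rfl fun m _ => ?_
            by_cases h : m = j <;> simp [h]
          rw [e1, Finset.sum_ite_eq' (Finset.Icc 1 k) j a, if_pos hjIcc]
        · rw [Nat.mod_eq_of_lt hajlt, himod, hij]
      have hv1 : omega1 k a i = a j := by
        have h1 : omega1 k a i % a k = a j := by
          rw [hO1.2, himod, hij]
        have h2 : omega1 k a i % a k = omega1 k a i :=
          Nat.mod_eq_of_lt (by omega)
        omega
      have hub2 : omega2 k a (a k - i) ≤ a k - a j := by
        refine Nat.sInf_le ⟨⟨fun m => if m = j then 1 else 0, ?_⟩, ?_⟩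
        · have e1 : ∑ m ∈ Finset.range k, (if m = j then 1 else 0) * (a k - a m)
              = ∑ m ∈ Finset.range k, (if m = j then a k - a m else 0) := by
            refine Finset.sum_congr rfl fun m _ => ?_
            by_cases h : m = j <;> simp [h]
          rw [e1, Finset.sum_ite_eq' (Finset.range k) j (fun m => a k - a m),
            if_pos (Finset.mem_range.mpr (by omega))]
        · rw [hij, Nat.mod_eq_of_lt (by omega : a k - a j < a k)]
      have hv2 : omega2 k a (a k - i) = a k - a j := by
        have h1 : omega2 k a (a k - i) % a k = a k - a j := by
          rw [hO2.2, hij]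
          exact Nat.mod_eq_of_lt (by omega)
        have h2 : omega2 k a (a k - i) % a k = omega2 k a (a k - i) :=
          Nat.mod_eq_of_lt (by omega)
        omega
      rw [mem_S_iff ha0 hle]
      refine ⟨1, fun m => if m = j then 1 else 0, ?_, ?_, ?_⟩
      · have e1 : ∑ m ∈ Finset.Icc 1 k, (if m = j then 1 else 0) * a m
            = ∑ m ∈ Finset.Icc 1 k, (if m = j then a m else 0) := by
          refine Finset.sum_congr rfl fun m _ => ?_
          by_cases h : m = j <;> simp [h]
        rw [e1, Finset.sum_ite_eq' (Finset.Icc 1 k) j a, if_pos hjIcc, hW1, hv1]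
      · have e1 : ∑ m ∈ Finset.Icc 1 k, (if m = j then 1 else 0)
            = ∑ m ∈ Finset.Icc 1 k, (if m = j then 1 else 0) := rfl
        rw [Finset.sum_ite_eq' (Finset.Icc 1 k) j (fun _ => 1), if_pos hjIcc]
      · rw [hW1, hW2, hv1, hv2]
        omega
    have hdvdW : a k ∣ (w k a i).1 + (w k a i).2 := by
      apply Nat.dvd_of_mod_eq_zero
      rw [Nat.add_mod, hW1, hW2, hO1.2, hO2.2, himod,
        Nat.mod_eq_of_lt (by omega : a k - i < a k)]
      have e3 : i + (a k - i) = a k := by omega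
      rw [e3, Nat.mod_self]
    have hmW : (w k a i).1 + (w k a i).2 = deg k a (w k a i) * a k :=
      (Nat.div_mul_cancel hdvdW).symm
    have hdl : deg k a (w k a i) < delta1 k a (w k a i).1 := by
      by_contra h
      push_neg at h
      exact hWS ((mem_S_iff_delta ha0 hd hle _ _ hmW (hW1 ▸ hO1.1)).mpr h)
    have : i ∈ II k a := ⟨hi1, by omega, hiaj, hdl⟩
    rw [hII] at this
    exact this

end ProjMonomialCurve
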